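/- Let σ>0, λ>0, x>0 and a≥0. Then inf over γ∈ℝ with λx²γ<1 of [ σ²x²γ/(2(1−λx²γ)) − (1/2) a x² γ ] equals −(√a − σ)²/(2λ). That is, the concave conjugate in γ of the market-impact Hamiltonian H(x,·) at the slope (1/2)ax² is the running cost f(a) = −(√a−σ)²/(2λ) appearing in the dual stochastic control representation. -/

import Mathlib

/-- The concave conjugate in `γ` of the market-impact Hamiltonian at slope `(1/2)ax²`:
`inf_{γ : λx²γ<1} [ σ²x²γ/(2(1−λx²γ)) − (1/2) a x² γ ] = −(√a − σ)²/(2λ)` for `a ≥ 0`. -/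
theorem market_impact_concave_conjugate
    (σ lam x a : ℝ) (hσ : 0 < σ) (hlam : 0 < lam) (hx : 0 < x) (ha : 0 ≤ a) :
    sInf {v : ℝ | ∃ γ : ℝ, lam * x ^ 2 * γ < 1 ∧
        v = σ ^ 2 * x ^ 2 * γ / (2 * (1 - lam * x ^ 2 * γ)) - (1 / 2) * a * x ^ 2 * γ}
      = -(Real.sqrt a - σ) ^ 2 / (2 * lam) := by
  set s := Real.sqrt a with hsdef
  have hs0 : 0 ≤ s := Real.sqrt_nonneg a
  have hsa : s ^ 2 = a := Real.sq_sqrt ha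
  set c := -(s - σ) ^ 2 / (2 * lam) with hc
  clear_value c
  have hc' : 2 * lam * c = -(s - σ) ^ 2 := by
    rw [hc]; field_simp
  have hx2 : (0:ℝ) < x ^ 2 := by positivity
  have key : ∀ t : ℝ, 0 < t →
      (σ ^ 2 * (1 - t) / (2 * lam * t) - a * (1 - t) / (2 * lam)) ∈
        {v : ℝ | ∃ γ : ℝ, lam * x ^ 2 * γ < 1 ∧
          v = σ ^ 2 * x ^ 2 * γ / (2 * (1 - lam * x ^ 2 * γ)) - (1 / 2) * a * x ^ 2 * γ} := by
    intro t ht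
    refine ⟨(1 - t) / (lam * x ^ 2), ?_, ?_⟩
    · have : lam * x ^ 2 * ((1 - t) / (lam * x ^ 2)) = 1 - t := by
        field_simp
      rw [this]; linarith
    · have h1 : lam * x ^ 2 * ((1 - t) / (lam * x ^ 2)) = 1 - t := by
        field_simp
      rw [h1]
      field_simp [ht.ne']
      ring
  refine csInf_eq_of_forall_ge_of_forall_gt_exists_lt ⟨0, 0, by norm_num⟩ ?_ ?_
  · rintro v ⟨γ, hγ, hv⟩
    set t := 1 - lam * x ^ 2 * γ with htdef
    have ht : 0 < t := by simp [htdef]; linarith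
    have he : lam * x ^ 2 * γ = 1 - t := by rw [htdef]; ring
    have hv' : v * (2 * t) = σ ^ 2 * x ^ 2 * γ - a * x ^ 2 * γ * t := by
      rw [hv]
      field_simp
    have hv'' : 2 * lam * t * v = σ ^ 2 * (1 - t) - a * t * (1 - t) := by
      linear_combination lam * hv' + (σ ^ 2 - a * t) * he
    have hid : 2 * lam * t * (v - c) = (σ - s * t) ^ 2 := by
      linear_combination hv'' - t * hc' + (t - t ^ 2) * hsa
    nlinarith [hid, sq_nonneg (σ - s * t), mul_pos hlam ht]
  · intro w hw
    rcases eq_or_lt_of_le ha with hae | hapos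
    · set t : ℝ := σ ^ 2 / (lam * (w - c)) + 1 with htdef
      have hwc : 0 < w - c := by linarith
      have ht : 0 < t := by positivity
      refine ⟨_, key t ht, ?_⟩
      rw [← hae]
      have hval : σ ^ 2 * (1 - t) / (2 * lam * t) - 0 * (1 - t) / (2 * lam)
          = σ ^ 2 / (2 * lam * t) - σ ^ 2 / (2 * lam) := by
        field_simp
        ring
      rw [hval]
      have hs0' : s = 0 := by rw [hsdef, ← hae, Real.sqrt_zero]
      have hcval : c = -σ ^ 2 / (2 * lam) := by
        rw [hc, hs0']; ring_nf
      have h1 : σ ^ 2 / (2 * lam * t) < w - c := by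
        rw [div_lt_iff₀ (by positivity)]
        have h2 : (w - c) * (2 * lam * t) = 2 * σ ^ 2 + 2 * lam * (w - c) := by
          rw [htdef]; field_simp
        nlinarith
      have h3 : σ ^ 2 / (2 * lam) = -c := by rw [hcval]; ring
      linarith
    · have hspos : 0 < s := Real.sqrt_pos.mpr hapos
      set t : ℝ := σ / s with htdef
      have ht : 0 < t := by positivity
      refine ⟨_, key t ht, ?_⟩
      have hveq : σ ^ 2 * (1 - t) / (2 * lam * t) - a * (1 - t) / (2 * lam) = c := by
        rw [htdef, ← hsa, hc]
        field_simp
        ring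
      rw [hveq]; exact hw
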